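/- arXiv:2201.08915 — 4 statements merged into one kernel-verified Lean document; each statement's English description precedes it below -/
import Mathlib

section
/- In any alternative ring, the identity ([a,b],b,c) = [b,(a,b,c)] holds, where [x,y] = xy - yx and (x,y,z) = (xy)z - x(yz). -/
variable {A : Type*} [NonUnitalNonAssocRing A]

/-- Commutator `[x,y] = xy - yx`. -/
def altComm (x y : A) : A := x * y - y * x

/-- Associator `(x,y,z) = (xy)z - x(yz)`. -/
def altAssoc (x y z : A) : A := (x * y) * z - x * (y * z)

/-- Jordan product `x ∘ y = xy + yx`. -/
def altSop (x y : A) : A := x * y + y * x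

/-- Jacobian `J(a,b,c) = [[a,b],c] + [[b,c],a] + [[c,a],b]`. -/
def altJac (x y z : A) : A := altComm (altComm x y) z + altComm (altComm y z) x + altComm (altComm z x) y

/-- `D(a,b,c) = (a∘b)∘c - (a∘c)∘b`. -/
def altDop (x y z : A) : A := altSop (altSop x y) z - altSop (altSop x z) y

lemma linL (alt_left : ∀ x y : A, altAssoc x x y = 0) (x y z : A) :
    altAssoc x y z + altAssoc y x z = 0 := by
  have key : altAssoc x y z + altAssoc y x z =
      altAssoc (x + y) (x + y) z - altAssoc x x z - altAssoc y y z := by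
    simp only [altAssoc, add_mul, mul_add]; abel
  rw [key, alt_left, alt_left, alt_left]; abel

lemma linR (alt_right : ∀ x y : A, altAssoc y x x = 0) (x y z : A) :
    altAssoc x y z + altAssoc x z y = 0 := by
  have key : altAssoc x y z + altAssoc x z y =
      altAssoc x (y + z) (y + z) - altAssoc x y y - altAssoc x z z := by
    simp only [altAssoc, add_mul, mul_add]; abel
  rw [key, alt_right, alt_right, alt_right]; abel

theorem stmt_1
    (alt_left : ∀ x y : A, altAssoc x x y = 0)
    (alt_right : ∀ x y : A, altAssoc y x x = 0)
    (a b c : A) :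
    altAssoc (altComm a b) b c = altComm b (altAssoc a b c) := by
  have key : altAssoc (altComm a b) b c - altComm b (altAssoc a b c) =
      altAssoc (c*a) b b + altAssoc b b (a*c)
      + (altAssoc c b (a*b) + altAssoc b c (a*b))
      - (altAssoc c b (a*b) + altAssoc c (a*b) b)
      - (altAssoc c (b*b) a + altAssoc (b*b) c a)
      + (altAssoc c (b*b) a + altAssoc c a (b*b))
      - (altAssoc b c (a*b) + altAssoc b (a*b) c)
      - (altAssoc b (b*a) c + altAssoc (b*a) b c)
      + (altAssoc b (a*b) c + altAssoc (a*b) b c)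
      + (altAssoc (b*b) c a + altAssoc (b*b) a c)
      - c * altAssoc a b b
      - b * (altAssoc a b c + altAssoc b a c)
      + (altAssoc a b c + altAssoc a c b) * b
      - (altAssoc a c b + altAssoc c a b) * b
      - altAssoc b b a * c := by
    simp only [altAssoc, altComm, mul_add, add_mul, mul_sub, sub_mul]; abel
  have hz : altAssoc (altComm a b) b c - altComm b (altAssoc a b c) = 0 := by
    rw [key, alt_right b (c*a), alt_left b (a*c),
      linL alt_left c b (a*b), linR alt_right c b (a*b),
      linL alt_left c (b*b) a, linR alt_right c (b*b) a,
      linR alt_right b c (a*b), linL alt_left b (b*a) c,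
      linL alt_left b (a*b) c, linR alt_right (b*b) c a,
      alt_right b a, linL alt_left a b c, linR alt_right a b c,
      linL alt_left a c b, alt_left b a]
    simp
  exact sub_eq_zero.mp hz
end

section
/- In any alternative ring, (a^2, b, c) = (a,b,c)∘a = (a, b∘a, c), where a∘b = ab + ba and (x,y,z) = (xy)z - x(yz). -/
variable {A : Type*} [NonUnitalNonAssocRing A]

/-- Teichmüller identity, valid in any nonassociative ring. -/
lemma altTeich (w x y z : A) :
    altAssoc (w*x) y z - altAssoc w (x*y) z + altAssoc w x (y*z)
      = w * altAssoc x y z + altAssoc w x y * z := by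
  simp only [altAssoc, mul_sub, sub_mul]; abel

/-- The associator is skew in the first two arguments. -/
lemma altS12 (alt_left : ∀ x y : A, altAssoc x x y = 0) (x y z : A) :
    altAssoc x y z = - altAssoc y x z := by
  have e : altAssoc (x+y) (x+y) z
      = altAssoc x x z + altAssoc x y z + altAssoc y x z + altAssoc y y z := by
    simp only [altAssoc, add_mul, mul_add]; abel
  rw [alt_left, alt_left, alt_left] at e
  linear_combination (norm := abel) -e

/-- The associator is skew in the last two arguments. -/
lemma altS23 (alt_right : ∀ x y : A, altAssoc y x x = 0) (x y z : A) :
    altAssoc x y z = - altAssoc x z y := by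
  have e : altAssoc x (y+z) (y+z)
      = altAssoc x y y + altAssoc x y z + altAssoc x z y + altAssoc x z z := by
    simp only [altAssoc, add_mul, mul_add]; abel
  rw [alt_right, alt_right, alt_right] at e
  linear_combination (norm := abel) -e

/-- Additivity of the associator in the middle argument. -/
lemma altAdd2 (x u v z : A) :
    altAssoc x (u+v) z = altAssoc x u z + altAssoc x v z := by
  simp only [altAssoc, add_mul, mul_add]; abel

theorem stmt_4
    (alt_left : ∀ x y : A, altAssoc x x y = 0)
    (alt_right : ∀ x y : A, altAssoc y x x = 0)
    (a b c : A) :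
    altAssoc (a * a) b c = altSop (altAssoc a b c) a ∧ altSop (altAssoc a b c) a = altAssoc a (altSop b a) c := by
  have cyc : ∀ x y z : A, altAssoc x y z = altAssoc y z x := by
    intro x y z
    rw [altS12 alt_left, altS23 alt_right, neg_neg]
  have flex : ∀ x y : A, altAssoc x y x = 0 := by
    intro x y
    rw [altS23 alt_right, alt_left, neg_zero]
  -- e1 : G - X1 = P
  have e1 : altAssoc (a*a) b c - altAssoc a (a*b) c = a * altAssoc a b c := by
    have t := altTeich a a b c
    simp only [alt_left, zero_mul, add_zero] at t
    exact t
  -- e2 : X1 + X4 = P + Q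
  have e2 : altAssoc a (a*b) c + altAssoc a b (c*a)
      = a * altAssoc a b c + altAssoc a b c * a := by
    have t := altTeich a b c a
    rw [flex a (b*c), cyc (a*b) c a, cyc c a (a*b), cyc b c a, cyc c a b] at t
    simp only [sub_zero] at t
    exact t
  -- e4 : -X2 + G - X3 = 0
  have e4 : - altAssoc a (b*a) c + altAssoc (a*a) b c - altAssoc a b (a*c) = 0 := by
    have t := altTeich b a a c
    simp only [alt_left, alt_right, mul_zero, zero_mul, add_zero] at t
    rw [altS12 alt_left (b*a) a c, altS12 alt_left b (a*a) c,
        altS12 alt_left b a (a*c)] at t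
    linear_combination (norm := abel) t
  -- e6 : X3 + X4 - X1 = P
  have e6 : altAssoc a b (a*c) + altAssoc a b (c*a) - altAssoc a (a*b) c
      = a * altAssoc a b c := by
    have t := altTeich a c a b
    rw [flex a c, cyc (a*c) a b, altS23 alt_right a (c*a) b,
        altS23 alt_right a c (a*b), cyc c a b] at t
    simp only [zero_mul, add_zero] at t
    linear_combination (norm := abel) t
  -- e7 : X4 - G + X1 = 0
  have e7 : altAssoc a b (c*a) - altAssoc (a*a) b c + altAssoc a (a*b) c = 0 := by
    have t := altTeich c a a b
    simp only [alt_left, alt_right, mul_zero, zero_mul, add_zero] at t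
    rw [cyc (c*a) a b, cyc c (a*a) b, cyc c a (a*b)] at t
    exact t
  constructor
  · show altAssoc (a*a) b c = altAssoc a b c * a + a * altAssoc a b c
    linear_combination (norm := abel) e2 - e7
  · show altAssoc a b c * a + a * altAssoc a b c = altAssoc a (b*a + a*b) c
    rw [altAdd2]
    linear_combination (norm := abel) -e1 - e2 + e4 + e6
end

section
/- In any alternative ring, D(a,b,c) = 2(a,b,c) + [a,[b,c]], where D(a,b,c) = (a∘b)∘c - (a∘c)∘b, a∘b = ab + ba, [a,b] = ab - ba, and (x,y,z) = (xy)z - x(yz). -/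
variable {A : Type*} [NonUnitalNonAssocRing A]

theorem stmt_10
    (alt_left : ∀ x y : A, altAssoc x x y = 0)
    (alt_right : ∀ x y : A, altAssoc y x x = 0)
    (a b c : A) :
    altDop a b c = 2 • altAssoc a b c + altComm a (altComm b c) := by
  have hL : ∀ x y z : A, altAssoc x y z + altAssoc y x z = 0 := by
    intro x y z
    have h := alt_left (x + y) z
    have hx := alt_left x z
    have hy := alt_left y z
    simp only [altAssoc, add_mul, mul_add] at h hx hy ⊢
    linear_combination (norm := abel) h - hx - hy
  have hR : ∀ x y z : A, altAssoc x y z + altAssoc x z y = 0 := by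
    intro x y z
    have h := alt_right (y + z) x
    have hy := alt_right y x
    have hz := alt_right z x
    simp only [altAssoc, add_mul, mul_add] at h hy hz ⊢
    linear_combination (norm := abel) h - hy - hz
  have key : altDop a b c - (2 • altAssoc a b c + altComm a (altComm b c)) =
      -(altAssoc a b c + altAssoc b a c) - (altAssoc c a b + altAssoc a c b)
        + 2 • (altAssoc b c a + altAssoc b a c) - (altAssoc c b a + altAssoc b c a) := by
    simp only [altDop, altSop, altAssoc, altComm, add_mul, mul_add, sub_mul, mul_sub]
    abel
  have := key
  rw [hL a b c, hL c a b, hR b c a, hL c b a] at this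
  simp only [neg_zero, sub_zero, zero_add, add_zero, smul_zero] at this
  linear_combination (norm := abel) this
end

section
/- In any alternative ring, [a^2, [a, x]] = [a, [a^2, x]], where [a,b] = ab - ba; that is, the δ-identity δ[a^2,[a,x]] = 0 holds. -/
variable {A : Type*} [NonUnitalNonAssocRing A]

theorem stmt_12
    (alt_left : ∀ x y : A, altAssoc x x y = 0)
    (alt_right : ∀ x y : A, altAssoc y x x = 0)
    (a x : A) :
    altComm (a * a) (altComm a x) = altComm a (altComm (a * a) x) := by
  have flex : ∀ y : A, (a*y)*a = a*(y*a) := by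
    intro y
    have h := alt_right (y+a) a
    have h1 := alt_right y a
    have h2 := alt_right a a
    have h3 := alt_left a y
    simp only [altAssoc, mul_add, add_mul] at *
    linear_combination (norm := abel) h - h1 - h2 - h3
  have eL : ∀ y : A, (a*a)*y = a*(a*y) := fun y => by
    have := alt_left a y; simp only [altAssoc, sub_eq_zero] at this; exact this
  have eR : ∀ y : A, y*(a*a) = (y*a)*a := fun y => by
    have := alt_right a y; simp only [altAssoc, sub_eq_zero] at this; exact this.symm
  simp only [altComm, mul_sub, sub_mul]
  rw [eL (a*x), eL (x*a), eR (a*x), eR (x*a), eL x, eR x,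
      flex x, flex (x*a), show (a*(a*x))*a = a*(a*(x*a)) by rw [flex (a*x), flex x]]
  abel
end
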